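/- Let W be a non-negative random variable with P(W > 0) > 0, let β > 0, and set g(x) = E[exp(-W e^{βx})] for x ∈ ℝ. Then the following are equivalent: (i) for all y ∈ ℝ, lim_{x → -∞} (1 - g(x+y)) / (1 - g(x)) = e^{βy}; (ii) the function λ ↦ -log E[exp(-λ W)] is regularly varying at 0 with index 1, i.e. for every y > 0, lim_{t → 0+} (-log E[exp(-t y W)]) / (-log E[exp(-t W)]) = y. -/

import Mathlib

open MeasureTheory ProbabilityTheory Filter Set
open scoped ENNReal NNReal Topology

noncomputable section

/-- `𝔓`: point measures on `ℝ` assigning a finite integer mass to every interval `(x, ∞)`. -/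
def IsPP (D : Measure ℝ) : Prop := ∀ x : ℝ, ∃ n : ℕ, D (Set.Ioi x) = n

/-- ranked sequence of atoms: `nthAtom D n` is the position `d_{n+1}` of the `(n+1)`-st largest
atom of `D` (counted with multiplicity), equal to `⊥ = -∞` if `D` has at most `n` atoms. -/
def nthAtom (D : Measure ℝ) (n : ℕ) : EReal :=
  sInf (Real.toEReal '' {x : ℝ | D (Set.Ioi x) < (n : ℝ≥0∞) + 1})

/-- `max D`: position of the largest atom of `D`, `-∞` for the null measure. -/
def maxAtom (D : Measure ℝ) : EReal := nthAtom D 0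

/-- translation `τ_y D` of the point measure `D` by a real number `y`. -/
def ppTranslate (y : ℝ) (D : Measure ℝ) : Measure ℝ := Measure.map (fun x => x + y) D

/-- translation of `D` by an extended real shift, with the convention that a `±∞` shift gives
the null point measure. -/
def translateE (y : EReal) (D : Measure ℝ) : Measure ℝ :=
  if y = ⊥ ∨ y = ⊤ then 0 else ppTranslate y.toReal D

/-- `e^{α y}` for an extended real `y`, with `e^{α ⬝ (-∞)} = 0` (and junk value `0` at `+∞`). -/
def eweight (α : ℝ) (y : EReal) : ℝ :=
  if y = ⊥ ∨ y = ⊤ then 0 else Real.exp (α * y.toReal)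

/-- `⟨D, φ⟩ = ∫ φ dD` for a non-negative test function. -/
def lap (D : Measure ℝ) (φ : ℝ → ℝ) : ℝ≥0∞ := ∫⁻ x, ENNReal.ofReal (φ x) ∂D

/-- `e^{-t}` for `t : ℝ≥0∞`, with `e^{-∞} = 0`. -/
def expNeg (t : ℝ≥0∞) : ℝ := if t = ⊤ then 0 else Real.exp (-t.toReal)

/-- `ℝ≥0∞`-valued version of `expNeg`. -/
def nexp (t : ℝ≥0∞) : ℝ≥0∞ := ENNReal.ofReal (expNeg t)

/-- The point measure `Σ_j τ_{z_j} E_j`, where `(z_j)` are the ranked atoms of `Z`;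
atoms at `-∞` (i.e. beyond the total mass of `Z`) contribute the null measure. -/
def branchSum (Z : Measure ℝ) (Es : ℕ → Measure ℝ) : Measure ℝ :=
  Measure.sum fun j => translateE (nthAtom Z j) (Es j)

/-- `IsBranchLaw 𝒟 ℰ ν` : `ν` is the law of `Σ_j τ_{d_j} E^{(j)}` where `(d_j)` is the ranked atom
sequence of a point measure of law `𝒟` and `(E^{(j)})` are i.i.d. point measures of law `ℰ`
independent of it; i.e. `ν = 𝒟 ⊛ ℰ`. -/
def IsBranchLaw (μD μE ν : Measure (Measure ℝ)) : Prop :=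
  ∃ (Ω : Type) (_ : MeasurableSpace Ω) (P : Measure Ω) (D : Ω → Measure ℝ)
      (Es : ℕ → Ω → Measure ℝ),
    IsProbabilityMeasure P ∧ Measurable D ∧ (∀ j, Measurable (Es j)) ∧
    P.map D = μD ∧ (∀ j, P.map (Es j) = μE) ∧
    iIndepFun Es P ∧
    IndepFun D (fun ω j => Es j ω) P ∧
    P.map (fun ω => branchSum (D ω) fun j => Es j ω) = ν

/-- the law `μ` on point measures is carried by `𝔓`. -/
def OnPP (μ : Measure (Measure ℝ)) : Prop := μ {D | IsPP D} = 1

/-- the law `μ` on point measures is carried by `𝔓* = {D ∈ 𝔓 : max D = 0}`. -/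
def OnPPstar (μ : Measure (Measure ℝ)) : Prop := μ {D | IsPP D ∧ maxAtom D = 0} = 1

/-- `E` (of law `μE`) satisfies the fixed point equation `(⋆)`:
`E =_d Σ_j τ_{z_j} E^{(j)}` with `(E^{(j)})` i.i.d. copies of `E` independent of `Z ~ μZ`,
i.e. `ℰ = 𝒵 ⊛ ℰ`. -/
def SatisfiesStar (μZ μE : Measure (Measure ℝ)) : Prop := IsBranchLaw μZ μE μE

/-- Assumption (A1). -/
def AssumptionA1 (μZ : Measure (Measure ℝ)) (α : ℝ) : Prop :=
  1 < ∫⁻ D, D Set.univ ∂μZ ∧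
    ∫⁻ D, ∫⁻ x, ENNReal.ofReal (Real.exp (α * x)) ∂D ∂μZ = 1

/-- `X = ⟨Z, e^{αx}⟩ = Σ_j e^{α z_j}`. -/
def addMassE (α : ℝ) (D : Measure ℝ) : ℝ≥0∞ := ∫⁻ x, ENNReal.ofReal (Real.exp (α * x)) ∂D

/-- `X̃ = Σ_j (z_j)_+ e^{α z_j}`. -/
def posMassE (α : ℝ) (D : Measure ℝ) : ℝ≥0∞ :=
  ∫⁻ x, ENNReal.ofReal (max x 0 * Real.exp (α * x)) ∂D

/-- `log₊`. -/
def logPlus (x : ℝ) : ℝ := Real.log (max x 1)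

/-- Assumption (A2a), the regular case. -/
def AssumptionA2a (μZ : Measure (Measure ℝ)) (α : ℝ) : Prop :=
  (∀ᵐ D ∂μZ, Integrable (fun x => x * Real.exp (α * x)) D) ∧
  Integrable (fun D => ∫ x, x * Real.exp (α * x) ∂D) μZ ∧
  (∫ D, ∫ x, x * Real.exp (α * x) ∂D ∂μZ) < 0 ∧
  ∫⁻ D, addMassE α D * ENNReal.ofReal (logPlus (addMassE α D).toReal) ∂μZ < ⊤

/-- Assumption (A2b), the boundary case. -/
def AssumptionA2b (μZ : Measure (Measure ℝ)) (α : ℝ) : Prop :=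
  (∀ᵐ D ∂μZ, Integrable (fun x => x * Real.exp (α * x)) D) ∧
  Integrable (fun D => ∫ x, x * Real.exp (α * x) ∂D) μZ ∧
  (∫ D, ∫ x, x * Real.exp (α * x) ∂D ∂μZ) = 0 ∧
  (∫⁻ D, ∫⁻ x, ENNReal.ofReal (x ^ 2 * Real.exp (α * x)) ∂D ∂μZ < ⊤) ∧
  (∫⁻ D, addMassE α D * ENNReal.ofReal (logPlus (addMassE α D).toReal ^ 2) ∂μZ)
      + (∫⁻ D, posMassE α D * ENNReal.ofReal (logPlus (posMassE α D).toReal) ∂μZ) < ⊤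

/-- Assumption (A2). -/
def AssumptionA2 (μZ : Measure (Measure ℝ)) (α : ℝ) : Prop :=
  AssumptionA2a μZ α ∨ AssumptionA2b μZ α

/-- Assumption (A3), the non-lattice assumption. -/
def AssumptionA3 (μZ : Measure (Measure ℝ)) : Prop :=
  ∀ a : ℝ, 0 < a → ∀ b : ℝ,
    μZ {D | D {x : ℝ | ¬ ∃ k : ℤ, x = a * k + b} = 0} < 1

/-- The additive martingale variable `⟨Z_n, e^{αx}⟩`. -/
def addMart (α : ℝ) (D : Measure ℝ) : ℝ := (addMassE α D).toReal

/-- The derivative martingale variable `⟨Z_n, x e^{αx}⟩`. -/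
def derMart (α : ℝ) (D : Measure ℝ) : ℝ := ∫ x, x * Real.exp (α * x) ∂D

/-- `(Zn)` is a branching random walk with reproduction law `μZ` on the probability
space `(Ω, P)` : `Z_0 = δ_0` and `Z_{n+1} = Σ_k τ_{z_k^{(n)}} Z^{(k)}` where, given `Z_0, …, Z_n`
with `Z_n` of ranked atoms `(z_k^{(n)})`, the `(Z^{(k)})` are i.i.d. of law `μZ` independent
of `(Z_0, …, Z_n)`. -/
def IsBRW {Ω : Type*} [MeasurableSpace Ω] (P : Measure Ω) (μZ : Measure (Measure ℝ))
    (Zn : ℕ → Ω → Measure ℝ) : Prop :=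
  (∀ n, Measurable (Zn n)) ∧ (∀ᵐ ω ∂P, Zn 0 ω = Measure.dirac (0 : ℝ)) ∧
  ∀ n : ℕ, ∃ Es : ℕ → Ω → Measure ℝ,
    (∀ j, Measurable (Es j)) ∧ (∀ j, P.map (Es j) = μZ) ∧
    iIndepFun Es P ∧
    IndepFun (fun ω => fun k : Fin (n + 1) => Zn k ω) (fun ω => fun j : ℕ => Es j ω) P ∧
    ∀ᵐ ω ∂P, Zn (n + 1) ω = branchSum (Zn n ω) fun j => Es j ω

/-- `S` is the a.s. limit of the additive martingale of a branching random walk of reproduction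
law `μZ` in the regular case (A2a), and of its derivative martingale in the boundary case (A2b). -/
def IsMartLimit {Ω : Type*} [MeasurableSpace Ω] (P : Measure Ω) (α : ℝ)
    (μZ : Measure (Measure ℝ)) (S : Ω → ℝ) : Prop :=
  ∃ Zn : ℕ → Ω → Measure ℝ, IsBRW P μZ Zn ∧
    ((AssumptionA2a μZ α ∧
        ∀ᵐ ω ∂P, Tendsto (fun n => addMart α (Zn n ω)) atTop (𝓝 (S ω))) ∨
     (AssumptionA2b μZ α ∧
        ∀ᵐ ω ∂P, Tendsto (fun n => derMart α (Zn n ω)) atTop (𝓝 (S ω))))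

/-- The measure `c e^{-α x} dx` on `ℝ`. -/
def expIntensity (α c : ℝ) : Measure ℝ :=
  volume.withDensity fun x => ENNReal.ofReal (c * Real.exp (-(α * x)))

/-- `Λ` is the law of a Poisson point process with intensity `ν`, characterized by its
Laplace functional `E[e^{-⟨N, f⟩}] = exp(-∫ (1 - e^{-f}) dν)`. -/
def IsPPP (Λ : Measure (Measure ℝ)) (ν : Measure ℝ) : Prop :=
  IsProbabilityMeasure Λ ∧ ∀ f : ℝ → ℝ≥0∞, Measurable f →
    ∫⁻ D, nexp (∫⁻ x, f x ∂D) ∂Λ = nexp (∫⁻ x, 1 - nexp (f x) ∂ν)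

/-- law of the single-atom point measure `δ_{α⁻¹ log S}` when `S ~ μS`
(null measure when `S = 0`). -/
def shiftLaw (α : ℝ) (μS : Measure ℝ) : Measure (Measure ℝ) :=
  μS.map fun s => if s = 0 then (0 : Measure ℝ) else Measure.dirac (α⁻¹ * Real.log s)

/-- `μE` is the law of an SDPPP(`S`, `e^{-αx} dx`, `𝒟`) with `S ~ μS`, `𝒟 = μD`:
`μE = 𝒮 ⊛ 𝒳 ⊛ 𝒟` where `𝒮 = shiftLaw α μS` and `𝒳` is the law of a Poisson point process
of intensity `e^{-αx} dx`. -/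
def IsSDPPP (α : ℝ) (μS : Measure ℝ) (μD μE : Measure (Measure ℝ)) : Prop :=
  ∃ Λ ν : Measure (Measure ℝ), IsPPP Λ (expIntensity α 1) ∧
    IsBranchLaw (shiftLaw α μS) Λ ν ∧ IsBranchLaw ν μD μE

/-- The set `𝔗` of test functions: continuous, non-negative, bounded, with support bounded
on the left. -/
def TestFun (φ : ℝ → ℝ) : Prop :=
  Continuous φ ∧ (∀ x, 0 ≤ φ x) ∧ (∃ M, ∀ x, φ x ≤ M) ∧ ∃ K, ∀ x < K, φ x = 0

/-- Laplace functional `F_φ(x) = E[exp(-⟨τ_x E, φ⟩)]` of a law `μE` of point measures. -/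
def lapFun (μE : Measure (Measure ℝ)) (φ : ℝ → ℝ) (x : ℝ) : ℝ :=
  ∫ D, expNeg (lap (ppTranslate x D) φ) ∂μE

/-- `e^{α max D}`, with the convention `e^{α⬝(-∞)} = 0`. -/
def emax (α : ℝ) (D : Measure ℝ) : ℝ≥0∞ :=
  if maxAtom D = ⊥ ∨ maxAtom D = ⊤ then 0
  else ENNReal.ofReal (Real.exp (α * (maxAtom D).toReal))

/-- `E[exp(-⟨τ_x D, φ⟩)]` where `D ~ μD`. -/
def decLap (μD : Measure (Measure ℝ)) (φ : ℝ → ℝ) (x : ℝ) : ℝ :=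
  ∫ D, expNeg (lap (ppTranslate x D) φ) ∂μD

/-- `Ψ_φ(x) = -log E[exp(-⟨τ_x D, φ⟩)]`. -/
def PsiFun (μD : Measure (Measure ℝ)) (φ : ℝ → ℝ) (x : ℝ) : ℝ :=
  -Real.log (decLap μD φ x)

lemma aux_qlim : Tendsto (fun u : ℝ => -Real.log (1 - u) / u) (𝓝[>] (0:ℝ)) (𝓝 1) := by
  have hd : HasDerivAt Real.log 1 1 := by simpa using Real.hasDerivAt_log one_ne_zero
  have hs := hasDerivAt_iff_tendsto_slope.mp hd
  have hmap : Tendsto (fun u : ℝ => 1 - u) (𝓝[>] (0:ℝ)) (𝓝[≠] (1:ℝ)) := by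
    rw [tendsto_nhdsWithin_iff]
    constructor
    · have : Tendsto (fun u : ℝ => 1 - u) (𝓝 0) (𝓝 (1 - 0)) :=
        (continuous_const.sub continuous_id).tendsto 0
      simpa using this.mono_left nhdsWithin_le_nhds
    · filter_upwards [self_mem_nhdsWithin] with u hu
      simp only [mem_compl_iff, mem_singleton_iff]
      intro h
      rw [sub_eq_self] at h
      exact ne_of_gt (show (0:ℝ) < u from hu) h
  have := hs.comp hmap
  refine this.congr fun u => ?_
  show slope Real.log 1 (1 - u) = -Real.log (1 - u) / u
  rw [slope_def_field, Real.log_one, sub_zero, show (1:ℝ) - u - 1 = -u by ring,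
    div_neg, neg_div]

lemma aux_subst (g : ℝ → ℝ) {β z : ℝ} (hβ : 0 < β) :
    Tendsto (fun x : ℝ => g (Real.exp (β * x) * z) / g (Real.exp (β * x))) atBot (𝓝 z) ↔
      Tendsto (fun t : ℝ => g (t * z) / g t) (𝓝[>] (0:ℝ)) (𝓝 z) := by
  constructor
  · intro H
    have hm : Tendsto (fun t : ℝ => β⁻¹ * Real.log t) (𝓝[>] (0:ℝ)) atBot :=
      Real.tendsto_log_nhdsGT_zero.const_mul_atBot (inv_pos.mpr hβ)
    refine (H.comp hm).congr' ?_
    filter_upwards [self_mem_nhdsWithin] with t ht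
    have he : Real.exp (β * (β⁻¹ * Real.log t)) = t := by
      rw [← mul_assoc, mul_inv_cancel₀ hβ.ne', one_mul, Real.exp_log ht]
    simp [Function.comp, he]
  · intro H
    have he : Tendsto (fun x : ℝ => Real.exp (β * x)) atBot (𝓝[>] (0:ℝ)) := by
      rw [tendsto_nhdsWithin_iff]
      refine ⟨?_, Eventually.of_forall fun x => Real.exp_pos _⟩
      exact Real.tendsto_exp_atBot.comp (tendsto_id.const_mul_atBot hβ)
    exact (H.comp he).congr fun x => rfl

lemma aux_chain (a b c d : ℝ) (hc : c ≠ 0) (hb : b ≠ 0) : a / c * (c / b) * (b / d) = a / d := by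
  rw [div_mul_div_comm, div_mul_div_comm, show a * c * b = c * b * a by ring,
    show c * b * d = c * b * d from rfl, mul_div_mul_left _ _ (mul_ne_zero hc hb)]

lemma aux_sandwich (G : ℝ → ℝ) (hpos : ∀ t : ℝ, 0 < t → 0 < G t)
    (hlt : ∀ t : ℝ, 0 < t → G t < 1)
    (hlim : Tendsto G (𝓝[>] (0:ℝ)) (𝓝 1)) {z : ℝ} (hz : 0 < z) :
    Tendsto (fun t => (1 - G (t * z)) / (1 - G t)) (𝓝[>] (0:ℝ)) (𝓝 z) ↔
      Tendsto (fun t => -Real.log (G (t * z)) / -Real.log (G t)) (𝓝[>] (0:ℝ)) (𝓝 z) := by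
  have hhpos : ∀ t : ℝ, 0 < t → 0 < 1 - G t := fun t ht => by linarith [hlt t ht]
  have hLpos : ∀ t : ℝ, 0 < t → 0 < -Real.log (G t) := fun t ht =>
    neg_pos.mpr (Real.log_neg (hpos t ht) (hlt t ht))
  have hhlim : Tendsto (fun t : ℝ => 1 - G t) (𝓝[>] (0:ℝ)) (𝓝[>] (0:ℝ)) := by
    rw [tendsto_nhdsWithin_iff]
    constructor
    · simpa using (tendsto_const_nhds (x := (1:ℝ))).sub hlim
    · filter_upwards [self_mem_nhdsWithin] with t ht
      exact hhpos t ht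
  have rlim : Tendsto (fun t : ℝ => -Real.log (G t) / (1 - G t)) (𝓝[>] (0:ℝ)) (𝓝 1) := by
    refine (aux_qlim.comp hhlim).congr' ?_
    filter_upwards [self_mem_nhdsWithin] with t _
    show -Real.log (1 - (1 - G t)) / (1 - G t) = _
    rw [sub_sub_cancel]
  have hmulz : Tendsto (fun t : ℝ => t * z) (𝓝[>] (0:ℝ)) (𝓝[>] (0:ℝ)) := by
    rw [tendsto_nhdsWithin_iff]
    constructor
    · have : Tendsto (fun t : ℝ => t * z) (𝓝 0) (𝓝 (0 * z)) :=
        (continuous_id.mul continuous_const).tendsto 0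
      simpa using this.mono_left nhdsWithin_le_nhds
    · filter_upwards [self_mem_nhdsWithin] with t ht
      exact mul_pos ht hz
  have rzlim : Tendsto (fun t : ℝ => -Real.log (G (t * z)) / (1 - G (t * z)))
      (𝓝[>] (0:ℝ)) (𝓝 1) := rlim.comp hmulz
  have rinv : Tendsto (fun t : ℝ => (1 - G t) / -Real.log (G t)) (𝓝[>] (0:ℝ)) (𝓝 1) := by
    have := (rlim.inv₀ one_ne_zero)
    simp only [inv_one] at this
    refine this.congr fun t => ?_
    rw [inv_div]
  have rzinv : Tendsto (fun t : ℝ => (1 - G (t * z)) / -Real.log (G (t * z)))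
      (𝓝[>] (0:ℝ)) (𝓝 1) := rinv.comp hmulz
  constructor
  · intro Hh
    have := (rzlim.mul Hh).mul rinv
    rw [one_mul, mul_one] at this
    refine this.congr' ?_
    filter_upwards [self_mem_nhdsWithin] with t ht
    exact aux_chain _ _ _ _ (hhpos _ (mul_pos ht hz)).ne' (hhpos _ ht).ne'
  · intro HL
    have := (rzinv.mul HL).mul rlim
    rw [one_mul, mul_one] at this
    refine this.congr' ?_
    filter_upwards [self_mem_nhdsWithin] with t ht
    exact aux_chain _ _ _ _ (hLpos _ (mul_pos ht hz)).ne' (hLpos _ ht).ne'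

/-- for `g(x) = E[exp(-W e^{βx})]`, the regular-variation condition
`(1 - g(x+y))/(1 - g(x)) → e^{βy}` as `x → -∞` (for all `y`) is equivalent to
`λ ↦ -log E[e^{-λW}]` being regularly varying at `0` with index `1`. -/
theorem slow_variation_iff
    {Ω : Type*} [MeasurableSpace Ω] (P : Measure Ω) [IsProbabilityMeasure P]
    (W : Ω → ℝ) (hW : Measurable W) (hWnn : ∀ᵐ ω ∂P, 0 ≤ W ω)
    (hWpos : 0 < P {ω | 0 < W ω})
    (β : ℝ) (hβ : 0 < β) :
    (∀ y : ℝ, Tendsto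
        (fun x : ℝ => (1 - ∫ ω, Real.exp (-(W ω * Real.exp (β * (x + y)))) ∂P) /
          (1 - ∫ ω, Real.exp (-(W ω * Real.exp (β * x))) ∂P))
        atBot (𝓝 (Real.exp (β * y)))) ↔
    (∀ y : ℝ, 0 < y → Tendsto
        (fun t : ℝ => (-Real.log (∫ ω, Real.exp (-(t * y * W ω)) ∂P)) /
          (-Real.log (∫ ω, Real.exp (-(t * W ω)) ∂P)))
        (𝓝[>] (0 : ℝ)) (𝓝 y)) := by
  set G : ℝ → ℝ := fun t => ∫ ω, Real.exp (-(t * W ω)) ∂P with hGdef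
  -- integrability
  have hint : ∀ t : ℝ, 0 ≤ t → Integrable (fun ω => Real.exp (-(t * W ω))) P := by
    intro t ht
    refine Integrable.mono' (integrable_const 1)
      (Real.measurable_exp.comp (measurable_const.mul hW).neg).aestronglyMeasurable ?_
    filter_upwards [hWnn] with ω hω
    rw [Real.norm_eq_abs, abs_of_pos (Real.exp_pos _)]
    exact Real.exp_le_one_iff.mpr (neg_nonpos.mpr (mul_nonneg ht hω))
  have hpos : ∀ t : ℝ, 0 < t → 0 < G t := by
    intro t ht
    rw [hGdef]
    refine (integral_pos_iff_support_of_nonneg_ae ?_ (hint t ht.le)).mpr ?_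
    · exact Eventually.of_forall fun ω => (Real.exp_pos _).le
    · have : Function.support (fun ω => Real.exp (-(t * W ω))) = Set.univ := by
        ext ω; simp [Function.support, (Real.exp_pos _).ne']
      rw [this]; simp
  have hlt : ∀ t : ℝ, 0 < t → G t < 1 := by
    intro t ht
    have hkey : 0 < ∫ ω, (1 - Real.exp (-(t * W ω))) ∂P := by
      refine (integral_pos_iff_support_of_nonneg_ae ?_
        ((integrable_const 1).sub (hint t ht.le))).mpr ?_
      · filter_upwards [hWnn] with ω hω
        simp only [Pi.sub_apply, Pi.zero_apply, sub_nonneg]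
        exact Real.exp_le_one_iff.mpr (neg_nonpos.mpr (mul_nonneg ht.le hω))
      · refine lt_of_lt_of_le hWpos (measure_mono ?_)
        intro ω hω
        have : Real.exp (-(t * W ω)) < 1 :=
          Real.exp_lt_one_iff.mpr (neg_neg_iff_pos.mpr (mul_pos ht hω))
        simp only [Function.mem_support, Pi.sub_apply]
        intro h
        rw [sub_eq_zero] at h
        exact this.ne h.symm
    rw [integral_sub (integrable_const 1) (hint t ht.le)] at hkey
    simp only [integral_const, measure_univ, probReal_univ, ENNReal.toReal_one, smul_eq_mul, one_mul, mul_one] at hkey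
    rw [hGdef]
    linarith
  have hlim : Tendsto G (𝓝[>] (0:ℝ)) (𝓝 1) := by
    have := tendsto_integral_filter_of_dominated_convergence (μ := P)
      (l := 𝓝[>] (0:ℝ)) (F := fun t ω => Real.exp (-(t * W ω))) (f := fun _ => (1:ℝ))
      (bound := fun _ => (1:ℝ))
      (Eventually.of_forall fun t =>
        (Real.measurable_exp.comp (measurable_const.mul hW).neg).aestronglyMeasurable)
      ?_ (integrable_const 1) ?_
    · simpa using this
    · filter_upwards [self_mem_nhdsWithin] with t ht
      filter_upwards [hWnn] with ω hω
      rw [Real.norm_eq_abs, abs_of_pos (Real.exp_pos _)]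
      exact Real.exp_le_one_iff.mpr (neg_nonpos.mpr (mul_nonneg (le_of_lt ht) hω))
    · refine Eventually.of_forall fun ω => ?_
      have : Tendsto (fun t : ℝ => Real.exp (-(t * W ω))) (𝓝 0) (𝓝 (Real.exp (-(0 * W ω)))) :=
        (Real.continuous_exp.comp (continuous_id.mul continuous_const).neg).tendsto 0
      simpa using this.mono_left nhdsWithin_le_nhds
  have e1 : ∀ s : ℝ, (∫ ω, Real.exp (-(W ω * s)) ∂P) = G s := by
    intro s
    rw [hGdef]
    simp_rw [mul_comm (W _) s]
  have key1 : ∀ y : ℝ, (fun x : ℝ =>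
        (1 - ∫ ω, Real.exp (-(W ω * Real.exp (β * (x + y)))) ∂P) /
          (1 - ∫ ω, Real.exp (-(W ω * Real.exp (β * x))) ∂P)) =
      fun x : ℝ => (1 - G (Real.exp (β * x) * Real.exp (β * y))) / (1 - G (Real.exp (β * x))) := by
    intro y
    funext x
    rw [e1, e1, mul_add, Real.exp_add]
  constructor
  · intro H1 y hy
    have Hz := H1 (β⁻¹ * Real.log y)
    rw [key1] at Hz
    have hzy : Real.exp (β * (β⁻¹ * Real.log y)) = y := by
      rw [← mul_assoc, mul_inv_cancel₀ hβ.ne', one_mul, Real.exp_log hy]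
    rw [hzy] at Hz
    have Hh := (aux_subst (fun t => 1 - G t) hβ).mp Hz
    exact (aux_sandwich G hpos hlt hlim hy).mp Hh
  · intro H2 y
    have hzpos : (0:ℝ) < Real.exp (β * y) := Real.exp_pos _
    have HL : Tendsto (fun t : ℝ =>
        -Real.log (G (t * Real.exp (β * y))) / -Real.log (G t)) (𝓝[>] (0:ℝ))
        (𝓝 (Real.exp (β * y))) := H2 _ hzpos
    have Hh := (aux_sandwich G hpos hlt hlim hzpos).mpr HL
    have Hz := (aux_subst (fun t => 1 - G t) hβ).mpr Hh
    rw [key1 y]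
    exact Hz

end
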